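/- Suppose Σ = A^d_σ (1 on the diagonal, σ ∈ (0,1) elsewhere). For a structure s = (s_1,…,s_M) of positive integers summing to d, with 𝒫_s the partition into consecutive blocks of sizes s_i, one has KL(f_Σ ‖ f_{Σ_{𝒫_s}}) = (1/2)(∑_{i=1}^M log((1+(s_i−1)σ)/(1−σ)) − log((1+(d−1)σ)/(1−σ))). Moreover, among all structures with all s_i ≤ k (where k < d, d = pk + r, 0 ≤ r < k), this KL is minimized by the structure s* = (k,…,k,r) with p blocks of size k and one block of size r. -/

import Mathlib

open Real MeasureTheory Matrix
open scoped Classical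

/-- Centered multivariate Gaussian density with covariance `S0`. -/
noncomputable def gaussianDensity {d : ℕ} (S0 : Matrix (Fin d) (Fin d) ℝ)
    (x : Fin d → ℝ) : ℝ :=
  (2 * Real.pi) ^ (-(d : ℝ) / 2) * S0.det ^ (-(1 : ℝ) / 2) *
    Real.exp (-(dotProduct x (S0⁻¹.mulVec x)) / 2)

/-- The `d × d` matrix with `1` on the diagonal and `σ` elsewhere. -/
noncomputable def Amat (d : ℕ) (σ : ℝ) : Matrix (Fin d) (Fin d) ℝ :=
  fun i j => if i = j then 1 else σ

/-- Offset of the `m`-th consecutive block of the structure `s`. -/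
def offset {M : ℕ} (s : Fin M → ℕ) (m : Fin M) : ℕ :=
  ∑ t : Fin M, if t < m then s t else 0

/-- `i` and `j` lie in the same consecutive block of the structure `s`. -/
def SameBlock {M : ℕ} (s : Fin M → ℕ) (d : ℕ) (i j : Fin d) : Prop :=
  ∃ m : Fin M, (offset s m ≤ (i : ℕ) ∧ (i : ℕ) < offset s m + s m) ∧
    (offset s m ≤ (j : ℕ) ∧ (j : ℕ) < offset s m + s m)

/-- `Σ_{P_s}`: keep the entries of `S0` within the consecutive blocks of the
structure `s`, zero the rest. -/
noncomputable def structMatrix {d M : ℕ} (s : Fin M → ℕ)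
    (S0 : Matrix (Fin d) (Fin d) ℝ) : Matrix (Fin d) (Fin d) ℝ :=
  fun i j => if SameBlock s d i j then S0 i j else 0

/-- KL divergence between the centered Gaussians with covariances `S0` and `S1`. -/
noncomputable def klGauss {d : ℕ} (S0 S1 : Matrix (Fin d) (Fin d) ℝ) : ℝ :=
  ∫ x : Fin d → ℝ,
    Real.log (gaussianDensity S0 x / gaussianDensity S1 x) * gaussianDensity S0 x

lemma g1_int : Integrable (fun t : ℝ => Real.exp (-(1/2) * t^2)) :=
  integrable_exp_neg_mul_sq (by norm_num)

lemma g1_mul_int : Integrable (fun t : ℝ => t * Real.exp (-(1/2) * t^2)) :=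
  integrable_mul_exp_neg_mul_sq (by norm_num)

lemma g1_sq_int : Integrable (fun t : ℝ => t^2 * Real.exp (-(1/2) * t^2)) := by
  have := integrable_rpow_mul_exp_neg_mul_sq (b := 1/2) (by norm_num) (s := 2) (by norm_num)
  simpa [Real.rpow_two] using this

lemma g1_val : ∫ t : ℝ, Real.exp (-(1/2) * t^2) = Real.sqrt (2 * π) := by
  rw [integral_gaussian, show π / (1/2) = 2 * π by ring]

lemma integral_comp_neg_real (f : ℝ → ℝ) : ∫ t : ℝ, f (-t) = ∫ t : ℝ, f t := by
  have mp : MeasurePreserving (fun x : ℝ => -x) volume volume :=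
    ⟨measurable_neg, Measure.map_neg_eq_self _⟩
  exact mp.integral_comp (Homeomorph.neg ℝ).measurableEmbedding f

lemma g1_mul_val : ∫ t : ℝ, t * Real.exp (-(1/2) * t^2) = 0 := by
  have h := integral_comp_neg_real (fun t : ℝ => t * Real.exp (-(1/2) * t^2))
  have h2 : ∀ t : ℝ, (-t) * Real.exp (-(1/2) * (-t)^2) = -(t * Real.exp (-(1/2) * t^2)) := by
    intro t; ring_nf
  simp only [h2] at h
  rw [integral_neg] at h
  linarith

lemma g1_sq_val : ∫ t : ℝ, t^2 * Real.exp (-(1/2) * t^2) = Real.sqrt (2 * π) := by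
  set f : ℝ → ℝ := fun t => (t^2 - 1) * Real.exp (-(1/2) * t^2) with hf
  have hfint : Integrable f := by
    have := g1_sq_int.sub g1_int
    simpa [hf, sub_mul, Pi.sub_def] using this
  have hderiv : ∀ x ∈ Set.Ici (0:ℝ), HasDerivAt (fun x : ℝ => -x * Real.exp (-(1/2) * x^2)) (f x) x := by
    intro x _
    have h1 : HasDerivAt (fun x : ℝ => -(1/2) * x^2) (-x) x := by
      simpa using ((hasDerivAt_pow 2 x).const_mul (-(1/2):ℝ))
    have h2 : HasDerivAt (fun x : ℝ => Real.exp (-(1/2) * x^2)) (Real.exp (-(1/2) * x^2) * (-x)) x :=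
      h1.exp
    have h3 : HasDerivAt (fun y : ℝ => -y * Real.exp (-(1/2) * y^2))
        (-1 * Real.exp (-(1/2) * x^2) + -x * (Real.exp (-(1/2) * x^2) * (-x))) x :=
      (hasDerivAt_neg x).mul h2
    convert h3 using 1
    simp [hf]; ring
  have htend : Filter.Tendsto (fun x : ℝ => -x * Real.exp (-(1/2) * x^2)) Filter.atTop (nhds 0) := by
    have hlo := rpow_mul_exp_neg_mul_sq_isLittleO_exp_neg (b := 1/2) (by norm_num) 1
    have hmul : Filter.Tendsto (fun x : ℝ => (1/2 : ℝ) * x) Filter.atTop Filter.atTop :=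
      Filter.Tendsto.const_mul_atTop (by norm_num) Filter.tendsto_id
    have h0 : Filter.Tendsto (fun x : ℝ => Real.exp (-((1/2 : ℝ) * x))) Filter.atTop (nhds 0) :=
      Real.tendsto_exp_neg_atTop_nhds_zero.comp hmul
    have h0' : Filter.Tendsto (fun x : ℝ => Real.exp (-(1/2 : ℝ) * x)) Filter.atTop (nhds 0) := by
      simpa [neg_mul] using h0
    have := hlo.isBigO.trans_tendsto h0'
    have heq : (fun x : ℝ => x * Real.exp (-(1/2) * x^2)) =ᶠ[Filter.atTop]
        (fun x : ℝ => x ^ (1:ℝ) * Real.exp (-(1/2) * x^2)) := by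
      filter_upwards [Filter.eventually_ge_atTop (0:ℝ)] with x hx
      rw [Real.rpow_one]
    have := (Filter.Tendsto.congr' heq.symm this).neg
    simpa [neg_mul] using this
  have hIoi : ∫ x in Set.Ioi (0:ℝ), f x = 0 - (-(0:ℝ) * Real.exp (-(1/2) * (0:ℝ)^2)) :=
    integral_Ioi_of_hasDerivAt_of_tendsto' hderiv hfint.integrableOn htend
  have heven : ∫ t : ℝ, f t = 2 * ∫ x in Set.Ioi (0:ℝ), f x := by
    have : ∀ t : ℝ, f t = f |t| := by
      intro t; simp [hf, sq_abs]
    conv_lhs => rw [show f = fun t => f |t| from funext this]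
    exact integral_comp_abs
  have hzero : ∫ t : ℝ, f t = 0 := by
    rw [heven, hIoi]; norm_num
  have hsplit : ∫ t : ℝ, f t = (∫ t : ℝ, t^2 * Real.exp (-(1/2) * t^2)) - ∫ t : ℝ, Real.exp (-(1/2) * t^2) := by
    rw [← integral_sub g1_sq_int g1_int]
    congr 1; funext t; simp [hf]; ring
  rw [hzero, g1_val] at hsplit
  linarith

variable {n : ℕ}

lemma exp_dot (y : Fin n → ℝ) :
    Real.exp (-(y ⬝ᵥ y)/2) = ∏ i, Real.exp (-(1/2) * (y i)^2) := by
  rw [← Real.exp_sum]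
  congr 1
  rw [dotProduct, neg_div, Finset.sum_div, ← Finset.sum_neg_distrib]
  exact Finset.sum_congr rfl fun i _ => by ring

noncomputable def gfun (i j l : Fin n) : ℝ → ℝ :=
  fun t => (if l = i then t else 1) * (if l = j then t else 1) * Real.exp (-(1/2) * t^2)

lemma prod_gfun (i j : Fin n) (y : Fin n → ℝ) :
    y i * y j * Real.exp (-(y ⬝ᵥ y)/2) = ∏ l, gfun i j l (y l) := by
  rw [exp_dot]
  unfold gfun
  rw [Finset.prod_mul_distrib, Finset.prod_mul_distrib]
  congr 1
  congr 1
  · simp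
  · simp

lemma gfun_int (i j l : Fin n) : Integrable (gfun i j l) := by
  by_cases hi : l = i <;> by_cases hj : l = j
  · subst hi; subst hj
    have e : gfun l l l = fun t => t^2 * Real.exp (-(1/2) * t^2) := by
      funext t; simp [gfun]; ring
    rw [e]; exact g1_sq_int
  · subst hi
    have e : gfun l j l = fun t => t * Real.exp (-(1/2) * t^2) := by
      funext t; simp [gfun, hj]
    rw [e]; exact g1_mul_int
  · subst hj
    have e : gfun i l l = fun t => t * Real.exp (-(1/2) * t^2) := by
      funext t; simp [gfun, hi]
    rw [e]; exact g1_mul_int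
  · have e : gfun i j l = fun t => Real.exp (-(1/2) * t^2) := by
      funext t; simp [gfun, hi, hj]
    rw [e]; exact g1_int

lemma gfun_val (i j l : Fin n) :
    ∫ t : ℝ, gfun i j l t = if l = i ∧ l = j then Real.sqrt (2*π)
      else if l = i ∨ l = j then 0 else Real.sqrt (2*π) := by
  by_cases hi : l = i <;> by_cases hj : l = j
  · subst hi; subst hj
    have e : gfun l l l = fun t => t^2 * Real.exp (-(1/2) * t^2) := by
      funext t; simp [gfun]; ring
    rw [e, g1_sq_val]; simp
  · subst hi
    have e : gfun l j l = fun t => t * Real.exp (-(1/2) * t^2) := by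
      funext t; simp [gfun, hj]
    rw [e, g1_mul_val]; simp [hj]
  · subst hj
    have e : gfun i l l = fun t => t * Real.exp (-(1/2) * t^2) := by
      funext t; simp [gfun, hi]
    rw [e, g1_mul_val]; simp [hi]
  · have e : gfun i j l = fun t => Real.exp (-(1/2) * t^2) := by
      funext t; simp [gfun, hi, hj]
    rw [e, g1_val]; simp [hi, hj]

lemma m0_int : Integrable (fun y : Fin n → ℝ => Real.exp (-(y ⬝ᵥ y)/2)) := by
  have : (fun y : Fin n → ℝ => Real.exp (-(y ⬝ᵥ y)/2))
      = fun y : Fin n → ℝ => ∏ i, Real.exp (-(1/2) * (y i)^2) := funext exp_dot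
  rw [this]
  exact Integrable.fintype_prod fun _ => g1_int

lemma m0_val : ∫ y : Fin n → ℝ, Real.exp (-(y ⬝ᵥ y)/2) = Real.sqrt (2*π) ^ n := by
  have : (fun y : Fin n → ℝ => Real.exp (-(y ⬝ᵥ y)/2))
      = fun y : Fin n → ℝ => ∏ i, Real.exp (-(1/2) * (y i)^2) := funext exp_dot
  rw [this, MeasureTheory.integral_fintype_prod_volume_eq_pow (fun t : ℝ => Real.exp (-(1/2) * t^2)),
    g1_val, Fintype.card_fin]

lemma m2_int (i j : Fin n) :
    Integrable (fun y : Fin n → ℝ => y i * y j * Real.exp (-(y ⬝ᵥ y)/2)) := by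
  have : (fun y : Fin n → ℝ => y i * y j * Real.exp (-(y ⬝ᵥ y)/2))
      = fun y : Fin n → ℝ => ∏ l, gfun i j l (y l) := funext (prod_gfun i j)
  rw [this]
  exact Integrable.fintype_prod fun l => gfun_int i j l

lemma m2_val (i j : Fin n) :
    ∫ y : Fin n → ℝ, y i * y j * Real.exp (-(y ⬝ᵥ y)/2)
      = (if i = j then 1 else 0) * Real.sqrt (2*π) ^ n := by
  have h : (fun y : Fin n → ℝ => y i * y j * Real.exp (-(y ⬝ᵥ y)/2))
      = fun y : Fin n → ℝ => ∏ l, gfun i j l (y l) := funext (prod_gfun i j)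
  rw [h, MeasureTheory.integral_fintype_prod_volume_eq_prod]
  by_cases hij : i = j
  · subst hij
    rw [if_pos rfl, one_mul]
    have : ∀ l : Fin n, ∫ t : ℝ, gfun i i l t = Real.sqrt (2*π) := by
      intro l
      rw [gfun_val]
      by_cases hl : l = i <;> simp [hl]
    rw [Finset.prod_congr rfl fun l _ => this l, Finset.prod_const, Finset.card_univ,
      Fintype.card_fin]
  · rw [if_neg hij, zero_mul]
    refine Finset.prod_eq_zero (Finset.mem_univ i) ?_
    rw [gfun_val]
    simp [hij]

lemma mquad_int (N : Matrix (Fin n) (Fin n) ℝ) :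
    Integrable (fun y : Fin n → ℝ => (y ⬝ᵥ N.mulVec y) * Real.exp (-(y ⬝ᵥ y)/2)) := by
  have h : (fun y : Fin n → ℝ => (y ⬝ᵥ N.mulVec y) * Real.exp (-(y ⬝ᵥ y)/2))
      = fun y : Fin n → ℝ => ∑ p : Fin n × Fin n,
          N p.1 p.2 * (y p.1 * y p.2 * Real.exp (-(y ⬝ᵥ y)/2)) := by
    funext y
    rw [Fintype.sum_prod_type, dotProduct, Finset.sum_mul]
    refine Finset.sum_congr rfl fun i _ => ?_
    rw [Matrix.mulVec, dotProduct, Finset.mul_sum, Finset.sum_mul]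
    exact Finset.sum_congr rfl fun l _ => by ring
  rw [h]
  exact integrable_finset_sum _ fun p _ => (m2_int p.1 p.2).const_mul _

lemma mquad_val (N : Matrix (Fin n) (Fin n) ℝ) :
    ∫ y : Fin n → ℝ, (y ⬝ᵥ N.mulVec y) * Real.exp (-(y ⬝ᵥ y)/2)
      = N.trace * Real.sqrt (2*π) ^ n := by
  have h : (fun y : Fin n → ℝ => (y ⬝ᵥ N.mulVec y) * Real.exp (-(y ⬝ᵥ y)/2))
      = fun y : Fin n → ℝ => ∑ p : Fin n × Fin n,
          N p.1 p.2 * (y p.1 * y p.2 * Real.exp (-(y ⬝ᵥ y)/2)) := by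
    funext y
    rw [Fintype.sum_prod_type, dotProduct, Finset.sum_mul]
    refine Finset.sum_congr rfl fun i _ => ?_
    rw [Matrix.mulVec, dotProduct, Finset.mul_sum, Finset.sum_mul]
    exact Finset.sum_congr rfl fun l _ => by ring
  rw [h, integral_finset_sum _ fun p _ => (m2_int p.1 p.2).const_mul _]
  have : ∀ p : Fin n × Fin n, ∫ y : Fin n → ℝ,
      N p.1 p.2 * (y p.1 * y p.2 * Real.exp (-(y ⬝ᵥ y)/2))
      = N p.1 p.2 * ((if p.1 = p.2 then 1 else 0) * Real.sqrt (2*π) ^ n) := by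
    intro p
    rw [integral_const_mul, m2_val]
  rw [Finset.sum_congr rfl fun p _ => this p, Fintype.sum_prod_type]
  have h2 : ∀ i : Fin n, (∑ j : Fin n, N i j * ((if i = j then 1 else 0) * Real.sqrt (2*π) ^ n))
      = N i i * Real.sqrt (2*π) ^ n := by
    intro i
    have h3 : ∀ j : Fin n, N i j * ((if i = j then 1 else 0) * Real.sqrt (2*π) ^ n)
        = if i = j then N i j * Real.sqrt (2*π) ^ n else 0 := by
      intro j; by_cases hj : i = j <;> simp [hj]
    rw [Finset.sum_congr rfl fun j _ => h3 j, Finset.sum_ite_eq]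
    simp
  rw [Finset.sum_congr rfl fun i _ => h2 i, Matrix.trace, Finset.sum_mul]
  rfl

variable {n : ℕ}

lemma continuous_quad (M : Matrix (Fin n) (Fin n) ℝ) :
    Continuous fun x : Fin n → ℝ => x ⬝ᵥ M.mulVec x := by
  have he : (fun x : Fin n → ℝ => x ⬝ᵥ M.mulVec x)
      = fun x : Fin n → ℝ => ∑ i, x i * ∑ j, M i j * x j := rfl
  rw [he]
  exact continuous_finset_sum _ fun i _ => (continuous_apply i).mul
    (continuous_finset_sum _ fun j _ => continuous_const.mul (continuous_apply j))

lemma continuous_gd (S : Matrix (Fin n) (Fin n) ℝ) : Continuous (gaussianDensity S) := by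
  unfold gaussianDensity
  exact continuous_const.mul (((continuous_quad S⁻¹).neg.div_const 2).rexp)

lemma map_mulVec_eq {C : Matrix (Fin n) (Fin n) ℝ} (hC : C.det ≠ 0) :
    Measure.map (fun y : Fin n → ℝ => C.mulVec y) volume
      = ENNReal.ofReal |C.det|⁻¹ • volume := by
  have h := Real.map_matrix_volume_pi_eq_smul_volume_pi hC
  have he : (Matrix.toLin' C : (Fin n → ℝ) → (Fin n → ℝ)) = fun y => C.mulVec y := by
    funext y; exact Matrix.toLin'_apply C y
  rw [he] at h
  rw [h, abs_inv]

lemma measurable_mulVec (C : Matrix (Fin n) (Fin n) ℝ) :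
    Measurable (fun y : Fin n → ℝ => C.mulVec y) := by
  have he : (Matrix.toLin' C : (Fin n → ℝ) → (Fin n → ℝ)) = fun y => C.mulVec y := by
    funext y; exact Matrix.toLin'_apply C y
  rw [← he]
  exact Continuous.measurable (LinearMap.continuous_on_pi _)

lemma smul_ac (c : ENNReal) (μ : Measure (Fin n → ℝ)) : (c • μ) ≪ μ := by
  intro s hs
  simp [hs]

lemma integral_comp_mulVec {C : Matrix (Fin n) (Fin n) ℝ} (hC : C.det ≠ 0)
    (f : (Fin n → ℝ) → ℝ) (hf : AEStronglyMeasurable f (volume : Measure (Fin n → ℝ))) :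
    ∫ x, f x = |C.det| * ∫ y, f (C.mulVec y) := by
  have hmap := map_mulVec_eq hC
  have hf' : AEStronglyMeasurable f
      (Measure.map (fun y : Fin n → ℝ => C.mulVec y) volume) := by
    rw [hmap]; exact hf.mono_ac (smul_ac _ _)
  have h1 : ∫ y, f (C.mulVec y) = ∫ x, f x ∂(Measure.map (fun y : Fin n → ℝ => C.mulVec y) volume) :=
    (integral_map (measurable_mulVec C).aemeasurable hf').symm
  rw [h1, hmap, integral_smul_measure, ENNReal.toReal_ofReal (by positivity), smul_eq_mul,
    ← mul_assoc, mul_inv_cancel₀ (by simpa using hC), one_mul]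

lemma norm_const_aux (n : ℕ) {D : ℝ} (hD : 0 < D) :
    Real.sqrt D * ((2*π) ^ (-(n:ℝ)/2) * D ^ (-(1:ℝ)/2)) * Real.sqrt (2*π) ^ n = 1 := by
  have h2π : (0:ℝ) < 2*π := by positivity
  have e1 : D ^ ((1:ℝ)/2) * D ^ (-(1:ℝ)/2) = 1 := by
    rw [← Real.rpow_add hD]; norm_num
  have e2 : (2*π) ^ (-(n:ℝ)/2) * ((2*π) ^ ((1:ℝ)/2)) ^ n = 1 := by
    rw [← Real.rpow_natCast ((2*π) ^ ((1:ℝ)/2)) n, ← Real.rpow_mul h2π.le,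
      ← Real.rpow_add h2π, show -(n:ℝ)/2 + (1:ℝ)/2 * (n:ℝ) = 0 by ring, Real.rpow_zero]
  calc Real.sqrt D * ((2*π) ^ (-(n:ℝ)/2) * D ^ (-(1:ℝ)/2)) * Real.sqrt (2*π) ^ n
      = (D ^ ((1:ℝ)/2) * D ^ (-(1:ℝ)/2)) * ((2*π) ^ (-(n:ℝ)/2) * ((2*π) ^ ((1:ℝ)/2)) ^ n) := by
        rw [Real.sqrt_eq_rpow, Real.sqrt_eq_rpow]; ring
      _ = 1 := by rw [e1, e2, one_mul]

open scoped MatrixOrder in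
theorem klGauss_eq {S0 S1 : Matrix (Fin n) (Fin n) ℝ} (h0 : S0.PosDef)
    (h1 : 0 < S1.det) (htr : Matrix.trace (S1⁻¹ * S0) = (n:ℝ)) :
    klGauss S0 S1 = (1/2) * (Real.log S1.det - Real.log S0.det) := by
  have hdet0 : 0 < S0.det := h0.det_pos
  set C : Matrix (Fin n) (Fin n) ℝ := CFC.sqrt S0 with hCdef
  have hCpsd : C.PosSemidef := (CFC.sqrt_nonneg S0).posSemidef
  have hCC : C * C = S0 := CFC.sqrt_mul_sqrt_self S0 h0.posSemidef.nonneg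
  have hCdet2 : C.det * C.det = S0.det := by rw [← Matrix.det_mul, hCC]
  have hCdet_nonneg : 0 ≤ C.det := by
    rw [hCpsd.isHermitian.det_eq_prod_eigenvalues]
    exact Finset.prod_nonneg fun i _ => hCpsd.eigenvalues_nonneg i
  have hCdet_pos : 0 < C.det := by
    rcases hCdet_nonneg.lt_or_eq with h | h
    · exact h
    · exfalso; rw [← h] at hCdet2; simp at hCdet2; rw [← hCdet2] at hdet0; simp at hdet0
  have hCdet_ne : C.det ≠ 0 := hCdet_pos.ne'
  have hCunit : IsUnit C.det := hCdet_ne.isUnit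
  have hS0unit : IsUnit S0.det := hdet0.ne'.isUnit
  -- symmetry of C
  have hCsym : Cᵀ = C := by
    have := hCpsd.isHermitian
    rw [Matrix.IsHermitian] at this
    calc Cᵀ = Cᴴ := by ext i j; simp [Matrix.conjTranspose_apply, Matrix.transpose_apply]
    _ = C := this
  have hvm : ∀ x : Fin n → ℝ, C.vecMul x = C.mulVec x := by
    intro x; rw [← Matrix.mulVec_transpose, hCsym]
  have hquad : ∀ (M : Matrix (Fin n) (Fin n) ℝ) (y : Fin n → ℝ),
      (C.mulVec y) ⬝ᵥ M.mulVec (C.mulVec y) = y ⬝ᵥ ((C * M * C).mulVec y) := by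
    intro M y
    rw [dotProduct_mulVec, ← hvm, Matrix.vecMul_vecMul, ← dotProduct_mulVec, hvm,
      Matrix.mulVec_mulVec]
  have hS0inv : S0⁻¹ = C⁻¹ * C⁻¹ := by rw [← hCC, Matrix.mul_inv_rev]
  have hCS0C : C * S0⁻¹ * C = 1 := by
    rw [hS0inv, ← Matrix.mul_assoc, Matrix.mul_assoc C C⁻¹ C⁻¹, ← Matrix.mul_assoc C C⁻¹ C⁻¹]
    rw [Matrix.mul_nonsing_inv _ hCunit, Matrix.one_mul, Matrix.nonsing_inv_mul _ hCunit]
  set K0 : ℝ := (2 * π) ^ (-(n:ℝ)/2) * S0.det ^ (-(1:ℝ)/2) with hK0def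
  have hK0pos : 0 < K0 := by
    apply mul_pos <;> apply Real.rpow_pos_of_pos
    · positivity
    · exact hdet0
  have hK1pos : 0 < (2 * π) ^ (-(n:ℝ)/2) * S1.det ^ (-(1:ℝ)/2) := by
    apply mul_pos <;> apply Real.rpow_pos_of_pos
    · positivity
    · exact h1
  set c0 : ℝ := (1/2) * (Real.log S1.det - Real.log S0.det) with hc0def
  -- pointwise rewriting of the integrand
  have hg0pos : ∀ x, 0 < gaussianDensity S0 x := by
    intro x; unfold gaussianDensity
    exact mul_pos (by rw [← hK0def] at *; exact hK0pos) (Real.exp_pos _)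
  have hg1pos : ∀ x, 0 < gaussianDensity S1 x := by
    intro x; unfold gaussianDensity
    exact mul_pos hK1pos (Real.exp_pos _)
  have hpt : ∀ x : Fin n → ℝ,
      Real.log (gaussianDensity S0 x / gaussianDensity S1 x) * gaussianDensity S0 x
      = (c0 + ((x ⬝ᵥ S1⁻¹.mulVec x) - (x ⬝ᵥ S0⁻¹.mulVec x))/2) * gaussianDensity S0 x := by
    intro x
    congr 1
    rw [Real.log_div (hg0pos x).ne' (hg1pos x).ne']
    unfold gaussianDensity
    rw [Real.log_mul (by positivity) (Real.exp_pos _).ne',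
      Real.log_mul (by positivity) (Real.exp_pos _).ne',
      Real.log_mul (Real.rpow_pos_of_pos (by positivity) _).ne' (Real.rpow_pos_of_pos hdet0 _).ne',
      Real.log_mul (Real.rpow_pos_of_pos (by positivity) _).ne' (Real.rpow_pos_of_pos h1 _).ne',
      Real.log_exp, Real.log_exp, Real.log_rpow hdet0, Real.log_rpow h1]
    rw [hc0def]; ring
  have hfeq : (fun x : Fin n → ℝ =>
      Real.log (gaussianDensity S0 x / gaussianDensity S1 x) * gaussianDensity S0 x)
      = fun x => (c0 + ((x ⬝ᵥ S1⁻¹.mulVec x) - (x ⬝ᵥ S0⁻¹.mulVec x))/2) * gaussianDensity S0 x :=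
    funext hpt
  have hcont : Continuous (fun x : Fin n → ℝ =>
      (c0 + ((x ⬝ᵥ S1⁻¹.mulVec x) - (x ⬝ᵥ S0⁻¹.mulVec x))/2) * gaussianDensity S0 x) :=
    ((continuous_const.add (((continuous_quad S1⁻¹).sub (continuous_quad S0⁻¹)).div_const 2)).mul
      (continuous_gd S0))
  rw [klGauss, hfeq, integral_comp_mulVec hCdet_ne _ hcont.aestronglyMeasurable]
  -- the gaussian density composed with C
  have hgd0 : ∀ y : Fin n → ℝ, gaussianDensity S0 (C.mulVec y)
      = K0 * Real.exp (-(y ⬝ᵥ y)/2) := by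
    intro y
    unfold gaussianDensity
    rw [← hK0def, hquad S0⁻¹ y, hCS0C, Matrix.one_mulVec]
  set N : Matrix (Fin n) (Fin n) ℝ := C * S1⁻¹ * C with hNdef
  have htrN : N.trace = (n:ℝ) := by
    rw [hNdef, Matrix.trace_mul_cycle, hCC, Matrix.trace_mul_comm, htr]
  have hcomp : (fun y : Fin n → ℝ =>
      (c0 + (((C.mulVec y) ⬝ᵥ S1⁻¹.mulVec (C.mulVec y))
        - ((C.mulVec y) ⬝ᵥ S0⁻¹.mulVec (C.mulVec y)))/2) * gaussianDensity S0 (C.mulVec y))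
      = fun y : Fin n → ℝ =>
        (c0 * K0) * Real.exp (-(y ⬝ᵥ y)/2)
        + (K0/2) * ((y ⬝ᵥ N.mulVec y) * Real.exp (-(y ⬝ᵥ y)/2))
        + (-(K0/2)) * ((y ⬝ᵥ (1 : Matrix (Fin n) (Fin n) ℝ).mulVec y) * Real.exp (-(y ⬝ᵥ y)/2)) := by
    funext y
    rw [hgd0, hquad S1⁻¹ y, hquad S0⁻¹ y, hCS0C, ← hNdef, Matrix.one_mulVec]
    ring
  rw [hcomp]
  have i1 : Integrable (fun y : Fin n → ℝ => (c0 * K0) * Real.exp (-(y ⬝ᵥ y)/2)) :=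
    m0_int.const_mul _
  have i2 : Integrable (fun y : Fin n → ℝ =>
      (K0/2) * ((y ⬝ᵥ N.mulVec y) * Real.exp (-(y ⬝ᵥ y)/2))) := (mquad_int N).const_mul _
  have i3 : Integrable (fun y : Fin n → ℝ =>
      (-(K0/2)) * ((y ⬝ᵥ (1 : Matrix (Fin n) (Fin n) ℝ).mulVec y) * Real.exp (-(y ⬝ᵥ y)/2))) :=
    (mquad_int 1).const_mul _
  have i12 : Integrable (fun y : Fin n → ℝ => (c0 * K0) * Real.exp (-(y ⬝ᵥ y)/2)
      + (K0/2) * ((y ⬝ᵥ N.mulVec y) * Real.exp (-(y ⬝ᵥ y)/2))) := i1.add i2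
  rw [integral_add i12 i3, integral_add i1 i2, integral_const_mul, integral_const_mul,
    integral_const_mul, m0_val, mquad_val, mquad_val, htrN, Matrix.trace_one]
  have hsq : Real.sqrt S0.det = C.det := by
    rw [← hCdet2, Real.sqrt_mul_self hCdet_pos.le]
  have hone := norm_const_aux n hdet0
  rw [← hK0def] at hone
  rw [abs_of_pos hCdet_pos, ← hsq]
  simp only [Fintype.card_fin]
  linear_combination c0 * hone

noncomputable def Fdet (σ : ℝ) (n : ℕ) : ℝ := (1-σ)^n * ((1 + ((n:ℝ)-1)*σ)/(1-σ))

lemma one_add_pos {σ : ℝ} (hσ : σ ∈ Set.Ioo (0:ℝ) 1) (n : ℕ) : 0 < 1 + ((n:ℝ)-1)*σ := by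
  obtain ⟨h0, h1⟩ := hσ
  have hn : (0:ℝ) ≤ n := Nat.cast_nonneg n
  nlinarith

lemma Fdet_pos {σ : ℝ} (hσ : σ ∈ Set.Ioo (0:ℝ) 1) (n : ℕ) : 0 < Fdet σ n := by
  obtain ⟨h0, h1⟩ := hσ
  have := one_add_pos ⟨h0, h1⟩ n
  have h1σ : 0 < 1 - σ := by linarith
  exact mul_pos (pow_pos h1σ n) (div_pos this h1σ)

lemma det_ite {ι : Type*} [Fintype ι] [DecidableEq ι] {σ : ℝ} (hσ : σ ∈ Set.Ioo (0:ℝ) 1) :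
    (Matrix.of (fun i j : ι => if i = j then (1:ℝ) else σ)).det = Fdet σ (Fintype.card ι) := by
  obtain ⟨h0, h1⟩ := hσ
  have h1σ : (0:ℝ) < 1 - σ := by linarith
  have hM : Matrix.of (fun i j : ι => if i = j then (1:ℝ) else σ)
      = (1-σ) • (1 + Matrix.replicateCol Unit (fun _ : ι => σ/(1-σ)) * Matrix.replicateRow Unit (fun _ : ι => (1:ℝ))) := by
    ext i j
    by_cases h : i = j
    · subst h
      simp [Matrix.mul_apply, Matrix.one_apply_eq]
      field_simp
      ring
    · simp [Matrix.mul_apply, Matrix.one_apply_ne h, h]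
      field_simp
  rw [hM, Matrix.det_smul, Matrix.det_one_add_replicateCol_mul_replicateRow]
  rw [Fdet]
  have hdot : (fun _ : ι => (1:ℝ)) ⬝ᵥ (fun _ : ι => σ/(1-σ)) = (Fintype.card ι) * (σ/(1-σ)) := by
    simp [dotProduct, Finset.sum_const, Finset.card_univ]
  rw [hdot]
  field_simp
  ring

/-! ### PosDef of Amat -/

lemma amat_mulVec {d : ℕ} (σ : ℝ) (x : Fin d → ℝ) (i : Fin d) :
    (Amat d σ).mulVec x i = σ * (∑ j, x j) + (1-σ) * x i := by
  rw [Matrix.mulVec, dotProduct]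
  have : ∀ j : Fin d, Amat d σ i j * x j = σ * x j + (if i = j then (1-σ) * x j else 0) := by
    intro j
    by_cases h : i = j <;> simp [Amat, h] <;> ring
  rw [Finset.sum_congr rfl fun j _ => this j, Finset.sum_add_distrib, Finset.sum_ite_eq,
    Finset.mul_sum]
  simp

lemma amat_posDef {d : ℕ} {σ : ℝ} (hσ : σ ∈ Set.Ioo (0:ℝ) 1) : (Amat d σ).PosDef := by
  obtain ⟨h0, h1⟩ := hσ
  rw [Matrix.posDef_iff_dotProduct_mulVec]
  constructor
  · ext i j
    by_cases h : i = j
    · subst h; simp [Amat]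
    · have hji : ¬ j = i := fun hh => h hh.symm
      simp [Amat, Matrix.conjTranspose_apply, h, hji]
  · intro x hx
    have hdot : dotProduct (star x) ((Amat d σ).mulVec x)
        = σ * (∑ j, x j)^2 + (1-σ) * ∑ i, (x i)^2 := by
      rw [show star x = x from star_trivial x, dotProduct]
      rw [Finset.sum_congr rfl fun i _ => by rw [amat_mulVec]]
      rw [Finset.sum_congr rfl fun i _ => by
        rw [show x i * (σ * (∑ j, x j) + (1-σ) * x i)
          = (σ * (∑ j, x j)) * x i + (1-σ) * (x i)^2 by ring]]
      rw [Finset.sum_add_distrib, ← Finset.mul_sum, ← Finset.mul_sum]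
      ring
    rw [hdot]
    have hsq : 0 < ∑ i, (x i)^2 := by
      have hne : ∃ i, x i ≠ 0 := by
        by_contra h
        push_neg at h
        exact hx (funext h)
      obtain ⟨i, hi⟩ := hne
      have : 0 < (x i)^2 := by positivity
      refine Finset.sum_pos' (fun j _ => sq_nonneg _) ⟨i, Finset.mem_univ i, this⟩
    nlinarith [sq_nonneg (∑ j, x j)]

/-! ### offsets and blocks -/

section Blocks
variable {M d : ℕ} {s : Fin M → ℕ}

lemma offset_add_eq (m : Fin M) :
    offset s m + s m = ∑ t : Fin M, if t ≤ m then s t else 0 := by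
  unfold offset
  have h : ∀ t : Fin M, (if t ≤ m then s t else 0)
      = (if t < m then s t else 0) + (if t = m then s t else 0) := by
    intro t
    rcases lt_trichotomy t m with h | h | h
    · simp [h, le_of_lt h, h.ne]
    · simp [h, le_of_eq h]
    · simp [not_le.2 h, not_lt.2 h.le, h.ne']
  rw [Finset.sum_congr rfl fun t _ => h t, Finset.sum_add_distrib, Finset.sum_ite_eq' Finset.univ m s]
  simp

lemma offset_add_le_offset {m m' : Fin M} (h : m < m') :
    offset s m + s m ≤ offset s m' := by
  rw [offset_add_eq]
  unfold offset
  apply Finset.sum_le_sum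
  intro t _
  by_cases ht : t ≤ m
  · rw [if_pos ht, if_pos (lt_of_le_of_lt ht h)]
  · simp [ht]

lemma offset_add_le_d (hsum : ∑ i, s i = d) (m : Fin M) : offset s m + s m ≤ d := by
  rw [offset_add_eq, ← hsum]
  apply Finset.sum_le_sum
  intro t _
  split_ifs <;> simp

lemma exists_blk (hsum : ∑ i, s i = d) (v : Fin d) :
    ∃ m : Fin M, offset s m ≤ (v : ℕ) ∧ (v : ℕ) < offset s m + s m := by
  have hM : 0 < M := by
    by_contra h
    push_neg at h
    interval_cases M
    have : d = 0 := by simpa using hsum.symm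
    exact absurd v.isLt (by omega)
  classical
  set T : Finset (Fin M) := Finset.univ.filter (fun m => offset s m ≤ (v:ℕ)) with hT
  have hTne : T.Nonempty := by
    refine ⟨⟨0, hM⟩, ?_⟩
    rw [hT, Finset.mem_filter]
    refine ⟨Finset.mem_univ _, ?_⟩
    have : offset s ⟨0, hM⟩ = 0 := by
      unfold offset
      apply Finset.sum_eq_zero
      intro t _
      rw [if_neg]
      exact fun h => absurd h (by simp [Fin.lt_def])
    omega
  set m := T.max' hTne with hm
  have hmem : m ∈ T := T.max'_mem hTne
  rw [hT, Finset.mem_filter] at hmem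
  refine ⟨m, hmem.2, ?_⟩
  by_contra hge
  push_neg at hge
  by_cases hlt : (m : ℕ) + 1 < M
  · set m' : Fin M := ⟨(m:ℕ)+1, hlt⟩ with hm'
    have hmm' : m < m' := by
      rw [Fin.lt_def]
      exact Nat.lt_succ_self _
    have hoff : offset s m' = offset s m + s m := by
      rw [offset_add_eq]
      unfold offset
      apply Finset.sum_congr rfl
      intro t _
      have : t < m' ↔ t ≤ m := by
        rw [Fin.lt_def, Fin.le_def]
        exact Nat.lt_succ_iff
      simp [this]
    have hm'T : m' ∈ T := by
      rw [hT, Finset.mem_filter]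
      exact ⟨Finset.mem_univ _, by omega⟩
    have := T.le_max' m' hm'T
    rw [← hm] at this
    exact absurd this (not_le.2 hmm')
  · have hall : ∀ t : Fin M, t ≤ m := by
      intro t
      rw [Fin.le_def]
      omega
    have : offset s m + s m = d := by
      rw [offset_add_eq, ← hsum]
      apply Finset.sum_congr rfl
      intro t _
      rw [if_pos (hall t)]
    omega

lemma blk_unique {m m' : Fin M} {v : ℕ}
    (h : offset s m ≤ v ∧ v < offset s m + s m)
    (h' : offset s m' ≤ v ∧ v < offset s m' + s m') : m = m' := by
  rcases lt_trichotomy m m' with hlt | he | hgt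
  · have := offset_add_le_offset (s := s) hlt
    omega
  · exact he
  · have := offset_add_le_offset (s := s) hgt
    omega

end Blocks

/-! ### block structure of structMatrix -/

section Struct
variable {M d : ℕ}

noncomputable def blk {s : Fin M → ℕ} (hsum : ∑ i, s i = d) (v : Fin d) : Fin M :=
  (exists_blk hsum v).choose

lemma blk_spec {s : Fin M → ℕ} (hsum : ∑ i, s i = d) (v : Fin d) :
    offset s (blk hsum v) ≤ (v:ℕ) ∧ (v:ℕ) < offset s (blk hsum v) + s (blk hsum v) :=
  (exists_blk hsum v).choose_spec

lemma blk_eq_of {s : Fin M → ℕ} (hsum : ∑ i, s i = d) {m : Fin M} {v : Fin d}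
    (h1 : offset s m ≤ (v:ℕ)) (h2 : (v:ℕ) < offset s m + s m) : blk hsum v = m :=
  blk_unique (blk_spec hsum v) ⟨h1, h2⟩

lemma sameBlock_iff {s : Fin M → ℕ} (hsum : ∑ i, s i = d) (i j : Fin d) :
    SameBlock s d i j ↔ blk hsum i = blk hsum j := by
  constructor
  · rintro ⟨m, hi, hj⟩
    rw [blk_eq_of hsum hi.1 hi.2, blk_eq_of hsum hj.1 hj.2]
  · intro h
    exact ⟨blk hsum i, blk_spec hsum i, h ▸ blk_spec hsum j⟩

lemma blockTriangular_struct {s : Fin M → ℕ} (hsum : ∑ i, s i = d)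
    (S0 : Matrix (Fin d) (Fin d) ℝ) :
    BlockTriangular (structMatrix s S0) (blk hsum) := by
  intro i j h
  unfold structMatrix
  rw [if_neg]
  intro hs
  rw [sameBlock_iff hsum] at hs
  exact absurd hs h.ne'

lemma blockTriangular_struct' {s : Fin M → ℕ} (hsum : ∑ i, s i = d)
    (S0 : Matrix (Fin d) (Fin d) ℝ) :
    BlockTriangular (structMatrix s S0) (OrderDual.toDual ∘ blk hsum) := by
  intro i j h
  unfold structMatrix
  rw [if_neg]
  intro hs
  rw [sameBlock_iff hsum] at hs
  exact absurd hs (by exact (OrderDual.toDual_lt_toDual.mp h).ne)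

noncomputable def blockEquiv {s : Fin M → ℕ} (hsum : ∑ i, s i = d) (m : Fin M) :
    Fin (s m) ≃ {v : Fin d // blk hsum v = m} where
  toFun i := ⟨⟨offset s m + (i:ℕ), by
      have := offset_add_le_d hsum m
      have := i.isLt
      omega⟩,
    blk_eq_of hsum (by simp) (by simp [i.isLt])⟩
  invFun v := ⟨(v.1 : ℕ) - offset s m, by
      have h := v.2 ▸ blk_spec hsum v.1
      omega⟩
  left_inv i := by
    ext
    simp
  right_inv v := by
    have h := v.2 ▸ blk_spec hsum v.1
    ext
    simp
    omega

lemma card_blk {s : Fin M → ℕ} (hsum : ∑ i, s i = d) (m : Fin M) :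
    Fintype.card {v : Fin d // blk hsum v = m} = s m := by
  rw [← Fintype.card_congr (blockEquiv hsum m), Fintype.card_fin]

lemma det_struct {s : Fin M → ℕ} {σ : ℝ} (hσ : σ ∈ Set.Ioo (0:ℝ) 1)
    (hsum : ∑ i, s i = d) :
    (structMatrix s (Amat d σ)).det = ∏ m : Fin M, Fdet σ (s m) := by
  rw [(blockTriangular_struct hsum (Amat d σ)).det_fintype]
  refine Finset.prod_congr rfl fun m _ => ?_
  have he : (structMatrix s (Amat d σ)).toSquareBlock (blk hsum) m
      = Matrix.of (fun i j : {v : Fin d // blk hsum v = m} => if i = j then (1:ℝ) else σ) := by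
    ext i j
    rw [Matrix.toSquareBlock_def]
    have hsb : SameBlock s d i.1 j.1 := by
      rw [sameBlock_iff hsum, i.2, j.2]
    unfold structMatrix Amat
    simp only [Matrix.of_apply]
    rw [if_pos hsb]
    by_cases h : i = j
    · subst h; simp
    · have : i.1 ≠ j.1 := fun hh => h (Subtype.ext hh)
      simp [this, h]
  rw [he, det_ite hσ, card_blk hsum]

lemma det_struct_pos {s : Fin M → ℕ} {σ : ℝ} (hσ : σ ∈ Set.Ioo (0:ℝ) 1)
    (hsum : ∑ i, s i = d) : 0 < (structMatrix s (Amat d σ)).det := by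
  rw [det_struct hσ hsum]
  exact Finset.prod_pos fun m _ => Fdet_pos hσ (s m)

lemma inv_struct_support {s : Fin M → ℕ} {σ : ℝ} (hσ : σ ∈ Set.Ioo (0:ℝ) 1)
    (hsum : ∑ i, s i = d) {i j : Fin d} (h : blk hsum i ≠ blk hsum j) :
    (structMatrix s (Amat d σ))⁻¹ i j = 0 := by
  haveI := (structMatrix s (Amat d σ)).invertibleOfIsUnitDet
    (det_struct_pos hσ hsum).ne'.isUnit
  rcases h.lt_or_gt with hlt | hlt
  · exact blockTriangular_inv_of_blockTriangular (blockTriangular_struct' hsum (Amat d σ))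
      (show (OrderDual.toDual ∘ blk hsum) j < (OrderDual.toDual ∘ blk hsum) i from
        OrderDual.toDual_lt_toDual.mpr hlt)
  · exact blockTriangular_inv_of_blockTriangular (blockTriangular_struct hsum (Amat d σ)) hlt

lemma trace_struct {s : Fin M → ℕ} {σ : ℝ} (hσ : σ ∈ Set.Ioo (0:ℝ) 1)
    (hsum : ∑ i, s i = d) :
    Matrix.trace ((structMatrix s (Amat d σ))⁻¹ * Amat d σ) = (d:ℝ) := by
  set S1 := structMatrix s (Amat d σ) with hS1
  have hunit : IsUnit S1.det := (det_struct_pos hσ hsum).ne'.isUnit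
  have hinv : S1⁻¹ * S1 = 1 := Matrix.nonsing_inv_mul _ hunit
  have hterm : ∀ i l : Fin d, S1⁻¹ i l * Amat d σ l i = S1⁻¹ i l * S1 l i := by
    intro i l
    by_cases hb : blk hsum i = blk hsum l
    · have hsb : SameBlock s d l i := by
        rw [sameBlock_iff hsum, hb]
      rw [hS1]
      unfold structMatrix
      rw [if_pos hsb]
    · rw [inv_struct_support hσ hsum hb, zero_mul, zero_mul]
  have : S1⁻¹ * Amat d σ = fun i j => ∑ l, S1⁻¹ i l * Amat d σ l j := rfl
  calc Matrix.trace (S1⁻¹ * Amat d σ) = ∑ i, ∑ l, S1⁻¹ i l * Amat d σ l i := by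
        rw [Matrix.trace]
        exact Finset.sum_congr rfl fun i _ => by rw [Matrix.diag, Matrix.mul_apply]
    _ = ∑ i, ∑ l, S1⁻¹ i l * S1 l i := by
        exact Finset.sum_congr rfl fun i _ => Finset.sum_congr rfl fun l _ => hterm i l
    _ = Matrix.trace (S1⁻¹ * S1) := by
        rw [Matrix.trace]
        exact (Finset.sum_congr rfl fun i _ => by rw [Matrix.diag, Matrix.mul_apply]).symm
    _ = (d:ℝ) := by rw [hinv, Matrix.trace_one]; simp

end Struct

noncomputable def Lterm (σ : ℝ) (n : ℕ) : ℝ := Real.log ((1 + ((n:ℝ)-1)*σ) / (1-σ))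

lemma one_add_pos' {σ : ℝ} (hσ : σ ∈ Set.Ioo (0:ℝ) 1) (x : ℝ) (hx : 0 ≤ x) :
    0 < 1 + (x-1)*σ := by
  obtain ⟨h0, h1⟩ := hσ
  nlinarith

lemma Lterm_eq {σ : ℝ} (hσ : σ ∈ Set.Ioo (0:ℝ) 1) (n : ℕ) :
    Lterm σ n = Real.log (1 + ((n:ℝ)-1)*σ) - Real.log (1-σ) := by
  rw [Lterm, Real.log_div (one_add_pos' hσ n (Nat.cast_nonneg n)).ne'
    (by linarith [hσ.2] : (1:ℝ)-σ ≠ 0)]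

lemma Lterm_zero {σ : ℝ} (hσ : σ ∈ Set.Ioo (0:ℝ) 1) : Lterm σ 0 = 0 := by
  have h : (1 + (((0:ℕ):ℝ)-1)*σ)/(1-σ) = 1 := by
    rw [show (1:ℝ) + (((0:ℕ):ℝ)-1)*σ = 1-σ by push_cast; ring]
    exact div_self (by linarith [hσ.2])
  rw [Lterm, h, Real.log_one]

lemma Lterm_mono {σ : ℝ} (hσ : σ ∈ Set.Ioo (0:ℝ) 1) {a b : ℕ} (hab : a ≤ b) :
    Lterm σ a ≤ Lterm σ b := by
  obtain ⟨h0, h1⟩ := hσ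
  rw [Lterm_eq ⟨h0,h1⟩, Lterm_eq ⟨h0,h1⟩]
  have hcast : (a:ℝ) ≤ b := Nat.cast_le.2 hab
  have hpa := one_add_pos' ⟨h0,h1⟩ a (Nat.cast_nonneg a)
  have hle : 1 + ((a:ℝ)-1)*σ ≤ 1 + ((b:ℝ)-1)*σ := by nlinarith
  linarith [Real.log_le_log hpa hle]

lemma Lterm_nonneg {σ : ℝ} (hσ : σ ∈ Set.Ioo (0:ℝ) 1) (n : ℕ) : 0 ≤ Lterm σ n := by
  have := Lterm_mono hσ (Nat.zero_le n)
  rw [Lterm_zero hσ] at this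
  exact this

lemma Lterm_subadd {σ : ℝ} (hσ : σ ∈ Set.Ioo (0:ℝ) 1) (a b : ℕ) :
    Lterm σ (a + b) ≤ Lterm σ a + Lterm σ b := by
  obtain ⟨h0, h1⟩ := hσ
  have h1σ : (0:ℝ) < 1 - σ := by linarith
  have pa := one_add_pos' ⟨h0,h1⟩ a (Nat.cast_nonneg a)
  have pb := one_add_pos' ⟨h0,h1⟩ b (Nat.cast_nonneg b)
  have pab : (0:ℝ) < 1 + ((a:ℝ)+(b:ℝ)-1)*σ := by
    have := one_add_pos' ⟨h0,h1⟩ ((a:ℝ)+(b:ℝ)) (by positivity)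
    linarith [this]
  rw [Lterm_eq ⟨h0,h1⟩, Lterm_eq ⟨h0,h1⟩, Lterm_eq ⟨h0,h1⟩]
  have key : Real.log ((1 + (((a:ℝ)+(b:ℝ))-1)*σ) * (1-σ))
      ≤ Real.log ((1 + ((a:ℝ)-1)*σ) * (1 + ((b:ℝ)-1)*σ)) := by
    apply Real.log_le_log (by nlinarith)
    have hab : (0:ℝ) ≤ (a:ℝ) * b := by positivity
    nlinarith [mul_nonneg (mul_nonneg hab h0.le) h0.le]
  rw [Real.log_mul (by nlinarith) h1σ.ne', Real.log_mul pa.ne' pb.ne'] at key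
  push_cast
  linarith

lemma Lterm_concave_pair {σ : ℝ} (hσ : σ ∈ Set.Ioo (0:ℝ) 1) {a b a' b' : ℕ}
    (hsum : a' + b' = a + b) (ha' : a' ≤ a) (hab : a ≤ b) :
    Lterm σ a' + Lterm σ b' ≤ Lterm σ a + Lterm σ b := by
  obtain ⟨h0, h1⟩ := hσ
  have pa := one_add_pos' ⟨h0,h1⟩ a (Nat.cast_nonneg a)
  have pb := one_add_pos' ⟨h0,h1⟩ b (Nat.cast_nonneg b)
  have pa' := one_add_pos' ⟨h0,h1⟩ a' (Nat.cast_nonneg a')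
  have pb' := one_add_pos' ⟨h0,h1⟩ b' (Nat.cast_nonneg b')
  rw [Lterm_eq ⟨h0,h1⟩, Lterm_eq ⟨h0,h1⟩, Lterm_eq ⟨h0,h1⟩, Lterm_eq ⟨h0,h1⟩]
  have hcast : (a':ℝ) + b' = (a:ℝ) + b := by exact_mod_cast congrArg (Nat.cast : ℕ → ℝ) hsum
  have hca' : (a':ℝ) ≤ a := Nat.cast_le.2 ha'
  have hcab : (a:ℝ) ≤ b := Nat.cast_le.2 hab
  have key : Real.log ((1 + ((a':ℝ)-1)*σ) * (1 + ((b':ℝ)-1)*σ))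
      ≤ Real.log ((1 + ((a:ℝ)-1)*σ) * (1 + ((b:ℝ)-1)*σ)) := by
    apply Real.log_le_log (mul_pos pa' pb')
    have hb' : (b':ℝ) = (a:ℝ) + (b:ℝ) - (a':ℝ) := by linarith
    rw [hb']
    nlinarith [mul_nonneg (mul_nonneg (mul_nonneg h0.le h0.le) (sub_nonneg.2 hca'))
        (sub_nonneg.2 hcab),
      mul_nonneg (mul_nonneg h0.le h0.le) (sq_nonneg ((a:ℝ) - (a':ℝ)))]
  rw [Real.log_mul pa'.ne' pb'.ne', Real.log_mul pa.ne' pb.ne'] at key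
  linarith

lemma list_min {σ : ℝ} (hσ : σ ∈ Set.Ioo (0:ℝ) 1) {k : ℕ} (hk : 0 < k) :
    ∀ (fuel : ℕ) (l : List ℕ) (p r : ℕ), l.length ≤ fuel → r < k → (∀ a ∈ l, a ≤ k) →
      l.sum = p * k + r →
      (p:ℝ) * Lterm σ k + Lterm σ r ≤ (l.map (fun n => Lterm σ n)).sum := by
  intro fuel
  induction fuel with
  | zero =>
    intro l p r hlen hr _ hsuml
    have hl : l = [] := List.eq_nil_of_length_eq_zero (Nat.le_zero.1 hlen)
    subst hl
    simp only [List.sum_nil] at hsuml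
    have hp : p = 0 := by
      rcases Nat.eq_zero_or_pos p with h | h
      · exact h
      · exfalso
        have : k ≤ p * k := Nat.le_mul_of_pos_left k h
        omega
    have hr0 : r = 0 := by omega
    subst hp; subst hr0
    simp [Lterm_zero hσ]
  | succ fuel ih =>
    intro l p r hlen hr hle hsuml
    match l with
    | [] =>
      simp only [List.sum_nil] at hsuml
      have hp : p = 0 := by
        rcases Nat.eq_zero_or_pos p with h | h
        · exact h
        · exfalso
          have : k ≤ p * k := Nat.le_mul_of_pos_left k h
          omega
      have hr0 : r = 0 := by omega
      subst hp; subst hr0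
      simp [Lterm_zero hσ]
    | [c] =>
      simp only [List.sum_cons, List.sum_nil, add_zero] at hsuml
      have hck : c ≤ k := hle c (by simp)
      rcases Nat.eq_zero_or_pos p with hp | hp
      · subst hp
        simp only [Nat.zero_mul, zero_add] at hsuml
        subst hsuml
        simp
      · have hp1 : p = 1 := by
          by_contra hne
          have h2 : 2 ≤ p := by omega
          have : 2 * k ≤ p * k := Nat.mul_le_mul_right k h2
          omega
        subst hp1
        have hr0 : r = 0 := by omega
        have hc : c = k := by omega
        subst hr0; subst hc
        simp [Lterm_zero hσ]
    | x :: y :: t =>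
      have hab : min x y ≤ max x y := min_le_max
      have hbk : max x y ≤ k := max_le (hle x (by simp)) (hle y (by simp))
      have hak : min x y ≤ k := le_trans hab hbk
      have hsum2 : min x y + max x y = x + y := min_add_max x y
      have hLsum : Lterm σ (min x y) + Lterm σ (max x y) = Lterm σ x + Lterm σ y := by
        rcases le_total x y with h | h
        · rw [min_eq_left h, max_eq_right h]
        · rw [min_eq_right h, max_eq_left h]; ring
      simp only [List.sum_cons] at hsuml
      simp only [List.map_cons, List.sum_cons]
      have hlen' : t.length + 1 ≤ fuel := by
        simp only [List.length_cons] at hlen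
        omega
      have hmemt : ∀ z ∈ t, z ≤ k := fun z hz =>
        hle z (List.mem_cons_of_mem x (List.mem_cons_of_mem y hz))
      by_cases hk2 : min x y + max x y ≤ k
      · have hrec := ih ((min x y + max x y) :: t) p r (by simpa using hlen') hr
          (by
            intro z hz
            rcases List.mem_cons.1 hz with h | h
            · omega
            · exact hmemt z h)
          (by simp only [List.sum_cons]; omega)
        simp only [List.map_cons, List.sum_cons] at hrec
        have hsub := Lterm_subadd hσ (min x y) (max x y)
        linarith
      · push_neg at hk2
        have hpge : 1 ≤ p := by
          by_contra hp0
          have hp : p = 0 := by omega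
          subst hp
          simp only [Nat.zero_mul, zero_add] at hsuml
          omega
        obtain ⟨p', rfl⟩ : ∃ p', p = p' + 1 := ⟨p - 1, by omega⟩
        have hrec := ih ((min x y + max x y - k) :: t) p' r (by simpa using hlen') hr
          (by
            intro z hz
            rcases List.mem_cons.1 hz with h | h
            · omega
            · exact hmemt z h)
          (by
            simp only [List.sum_cons]
            have hmk : (p' + 1) * k = p' * k + k := by ring
            omega)
        simp only [List.map_cons, List.sum_cons] at hrec
        have hcp : Lterm σ (min x y + max x y - k) + Lterm σ k
            ≤ Lterm σ (min x y) + Lterm σ (max x y) := by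
          apply Lterm_concave_pair hσ _ _ hab
          · omega
          · omega
        have hc : ((p' + 1 : ℕ):ℝ) = (p':ℝ) + 1 := by push_cast; ring
        rw [hc]
        linarith


/-! ### the KL formula for structured covariance -/

lemma log_Fdet {σ : ℝ} (hσ : σ ∈ Set.Ioo (0:ℝ) 1) (n : ℕ) :
    Real.log (Fdet σ n) = (n:ℝ) * Real.log (1-σ) + Lterm σ n := by
  have h1σ : (0:ℝ) < 1-σ := by linarith [hσ.2]
  have hq : 0 < (1 + ((n:ℝ)-1)*σ)/(1-σ) :=
    div_pos (one_add_pos' hσ n (Nat.cast_nonneg n)) h1σ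
  rw [Fdet, Real.log_mul (pow_ne_zero n h1σ.ne') hq.ne', Real.log_pow, Lterm]

theorem kl_formula {σ : ℝ} (hσ : σ ∈ Set.Ioo (0:ℝ) 1) {M d : ℕ} {s : Fin M → ℕ}
    (hsum : ∑ i, s i = d) :
    klGauss (Amat d σ) (structMatrix s (Amat d σ))
      = (1/2) * ((∑ i : Fin M, Lterm σ (s i)) - Lterm σ d) := by
  rw [klGauss_eq (amat_posDef hσ) (det_struct_pos hσ hsum) (trace_struct hσ hsum)]
  have hdetA : (Amat d σ).det = Fdet σ d := by
    rw [show Amat d σ = Matrix.of (fun i j : Fin d => if i = j then (1:ℝ) else σ) from rfl,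
      det_ite hσ, Fintype.card_fin]
  rw [det_struct hσ hsum, hdetA,
    Real.log_prod (fun m _ => (Fdet_pos hσ (s m)).ne'), log_Fdet hσ,
    Finset.sum_congr rfl fun m _ => log_Fdet hσ (s m)]
  have hc : ∑ m : Fin M, (((s m):ℝ) * Real.log (1-σ) + Lterm σ (s m))
      = (d:ℝ) * Real.log (1-σ) + ∑ m : Fin M, Lterm σ (s m) := by
    rw [Finset.sum_add_distrib, ← Finset.sum_mul]
    congr 2
    rw [← hsum]
    push_cast
    ring
  rw [hc]
  ring


/-- for `Σ = A^d_σ`, `σ ∈ (0,1)`, and a structure `s = (s₁,…,s_M)` of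
positive integers summing to `d`,
`KL(f_Σ ‖ f_{Σ_{P_s}}) = (1/2)(∑ᵢ log((1+(sᵢ-1)σ)/(1-σ)) - log((1+(d-1)σ)/(1-σ)))`;
moreover among all structures with blocks of size at most `k < d`, the KL is minimized
by `s* = (k,…,k,r)` with `p` blocks of size `k`, where `d = pk + r`, `0 ≤ r < k`. -/
theorem stmt18 (d k p r : ℕ) (hk : 0 < k) (hkd : k < d) (hd : d = p * k + r) (hr : r < k)
    (σ : ℝ) (hσ : σ ∈ Set.Ioo (0 : ℝ) 1) :
    (∀ (M : ℕ) (s : Fin M → ℕ), (∀ i, 1 ≤ s i) → (∑ i, s i) = d →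
      klGauss (Amat d σ) (structMatrix s (Amat d σ))
        = (1 / 2) * ((∑ i : Fin M, Real.log ((1 + ((s i : ℝ) - 1) * σ) / (1 - σ)))
            - Real.log ((1 + ((d : ℝ) - 1) * σ) / (1 - σ)))) ∧
    (∀ (M : ℕ) (s : Fin M → ℕ), (∀ i, 1 ≤ s i) → (∀ i, s i ≤ k) → (∑ i, s i) = d →
      klGauss (Amat d σ)
          (structMatrix (fun m : Fin (p + 1) => if (m : ℕ) < p then k else r) (Amat d σ))
        ≤ klGauss (Amat d σ) (structMatrix s (Amat d σ))) := by
  have h1σ : (0:ℝ) < 1 - σ := by linarith [hσ.2]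
  have part1 : ∀ (M : ℕ) (s : Fin M → ℕ), (∑ i, s i) = d →
      klGauss (Amat d σ) (structMatrix s (Amat d σ))
        = (1/2) * ((∑ i : Fin M, Lterm σ (s i)) - Lterm σ d) :=
    fun M s hsum => kl_formula hσ hsum
  constructor
  · intro M s _ hsum
    rw [part1 M s hsum]
    simp only [Lterm]
  · intro M s hpos hle hsum
    have hsstar_sum : ∑ m : Fin (p+1), (if (m:ℕ) < p then k else r) = d := by
      rw [Fin.sum_univ_castSucc]
      have h1 : ∀ i : Fin p, (if ((Fin.castSucc i : Fin (p+1)):ℕ) < p then k else r) = k := by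
        intro i
        rw [if_pos]
        exact i.isLt
      have h2 : (if ((Fin.last p : Fin (p+1)):ℕ) < p then k else r) = r := by
        rw [if_neg]
        simp
      rw [Finset.sum_congr rfl fun i _ => h1 i, h2, Finset.sum_const, Finset.card_univ,
        Fintype.card_fin, smul_eq_mul, hd]
    rw [part1 _ _ hsstar_sum, part1 M s hsum]
    have hstar : ∑ m : Fin (p+1), Lterm σ (if (m:ℕ) < p then k else r)
        = (p:ℝ) * Lterm σ k + Lterm σ r := by
      rw [Fin.sum_univ_castSucc]
      have h1 : ∀ i : Fin p, Lterm σ (if ((Fin.castSucc i : Fin (p+1)):ℕ) < p then k else r)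
          = Lterm σ k := by
        intro i
        congr 1
        rw [if_pos]
        exact i.isLt
      have h2 : Lterm σ (if ((Fin.last p : Fin (p+1)):ℕ) < p then k else r) = Lterm σ r := by
        congr 1
        rw [if_neg]
        simp
      rw [Finset.sum_congr rfl fun i _ => h1 i, h2, Finset.sum_const, Finset.card_univ,
        Fintype.card_fin, nsmul_eq_mul]
    have hofn_sum : (List.ofFn s).sum = p * k + r := by
      rw [List.sum_ofFn, hsum, hd]
    have hofn_mem : ∀ a ∈ List.ofFn s, a ≤ k := by
      intro a ha
      rw [List.mem_ofFn] at ha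
      obtain ⟨i, rfl⟩ := ha
      exact hle i
    have hmin := list_min hσ hk (List.ofFn s).length (List.ofFn s) p r le_rfl hr hofn_mem hofn_sum
    have hmap : ((List.ofFn s).map (fun n => Lterm σ n)).sum = ∑ i : Fin M, Lterm σ (s i) := by
      rw [List.map_ofFn, List.sum_ofFn]
      rfl
    rw [hmap] at hmin
    rw [hstar]
    linarith
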